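/- Let θ := π/10 and set [m] := sin(mθ)/sin θ for m ∈ ℤ. Let M be the real 5×5 circulant matrix with first row (1/([2]²·[4]))·( [3][5], [3], −[3]², −[3]², [3] ), i.e. M_{j,k} = c_{(k−j) mod 5} with (c₀,c₁,c₂,c₃,c₄) = ( [3][5], [3], −[3]², −[3]², [3] )/([2]²·[4]). Then M is symmetric and M·M = [2]·M. -/

import Mathlib

/-- Trigonometric quantum integer `[m] = sin(m·π/10)/sin(π/10)`,
i.e. `[m]_q` at `q = e^{2πi/20}`. -/
noncomputable def qi10 (m : ℤ) : ℝ :=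
  Real.sin (m * (Real.pi / 10)) / Real.sin (Real.pi / 10)

/-- First row of the circulant 5×5 block U^{d_i}_{d_{i+1}}. -/
noncomputable def circRow : Fin 5 → ℝ :=
  ![qi10 3 * qi10 5 / (qi10 2 ^ 2 * qi10 4),
    qi10 3 / (qi10 2 ^ 2 * qi10 4),
    -(qi10 3 ^ 2) / (qi10 2 ^ 2 * qi10 4),
    -(qi10 3 ^ 2) / (qi10 2 ^ 2 * qi10 4),
    qi10 3 / (qi10 2 ^ 2 * qi10 4)]

/-- The circulant matrix M with M_{j,k} = c_{(k−j) mod 5}. -/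
noncomputable def circMat : Matrix (Fin 5) (Fin 5) ℝ :=
  Matrix.of fun j k => circRow (k - j)

open Real

lemma hr5 : Real.sqrt 5 ^ 2 = 5 := Real.sq_sqrt (by norm_num)

lemma hsin10 : Real.sin (π/10) = (Real.sqrt 5 - 1)/4 := by
  have h : π/10 = π/2 - 2*(π/5) := by ring
  rw [h, Real.sin_pi_div_two_sub, Real.cos_two_mul, Real.cos_pi_div_five]
  nlinarith [hr5]

lemma hsne : Real.sin (π/10) ≠ 0 := by
  have := Real.sin_pos_of_pos_of_lt_pi (x := π/10) (by positivity) (by linarith [Real.pi_pos])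
  linarith

lemma h3 : qi10 3 = (3 + Real.sqrt 5)/2 := by
  have h : ((3:ℤ):ℝ) * (π/10) = π/2 - π/5 := by push_cast; ring
  rw [qi10, h, Real.sin_pi_div_two_sub, Real.cos_pi_div_five, hsin10]
  have hne : Real.sqrt 5 - 1 ≠ 0 := by nlinarith [hr5, Real.sqrt_nonneg 5]
  field_simp
  nlinarith [hr5]

lemma h5 : qi10 5 = Real.sqrt 5 + 1 := by
  have h : ((5:ℤ):ℝ) * (π/10) = π/2 := by push_cast; ring
  rw [qi10, h, Real.sin_pi_div_two, hsin10]
  have hne : Real.sqrt 5 - 1 ≠ 0 := by nlinarith [hr5, Real.sqrt_nonneg 5]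
  field_simp
  nlinarith [hr5]

lemma h2 : qi10 2 = 2 * Real.cos (π/10) := by
  have h : ((2:ℤ):ℝ) * (π/10) = 2 * (π/10) := by push_cast; ring
  rw [qi10, h, Real.sin_two_mul]
  field_simp [hsne]

lemma h4 : qi10 4 = 4 * Real.cos (π/10) * Real.cos (π/5) := by
  have h : ((4:ℤ):ℝ) * (π/10) = 2 * (2 * (π/10)) := by push_cast; ring
  have h' : 2 * (π/10) = π/5 := by ring
  rw [qi10, h, Real.sin_two_mul, h', ← h', Real.sin_two_mul, h']
  field_simp [hsne]
  ring

lemma hcos10sq : Real.cos (π/10) ^ 2 = (10 + 2 * Real.sqrt 5)/16 := by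
  have := Real.sin_sq_add_cos_sq (π/10)
  rw [hsin10] at this
  nlinarith [hr5]

lemma hcos10pos : 0 < Real.cos (π/10) := by
  apply Real.cos_pos_of_mem_Ioo
  constructor <;> [linarith [Real.pi_pos]; linarith [Real.pi_pos]]

lemma hKpos : 0 < qi10 2 ^ 2 * qi10 4 := by
  rw [h2, h4, Real.cos_pi_div_five]
  have := hcos10pos
  have : (0:ℝ) < 1 + Real.sqrt 5 := by nlinarith [hr5, Real.sqrt_nonneg 5]
  positivity

lemma hKne : qi10 2 ^ 2 * qi10 4 ≠ 0 := ne_of_gt hKpos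

lemma hmul : qi10 2 * (qi10 2 ^ 2 * qi10 4) = 10 + 5 * Real.sqrt 5 := by
  rw [h2, h4, Real.cos_pi_div_five]
  have hc4 : Real.cos (π/10)^4 = ((10 + 2*Real.sqrt 5)/16)^2 := by
    rw [← hcos10sq]; ring
  linear_combination (8*(1 + Real.sqrt 5)) * hc4 + ((44 + 4*Real.sqrt 5)/32) * hr5

lemma key (x y : ℝ) (h : x = (10 + 5*Real.sqrt 5) * y) :
    x / ((qi10 2 ^ 2 * qi10 4) * (qi10 2 ^ 2 * qi10 4)) = qi10 2 * (y / (qi10 2 ^ 2 * qi10 4)) := by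
  have h2ne : qi10 2 ≠ 0 := fun h0 => hKne (by rw [h0]; ring)
  have h4ne : qi10 4 ≠ 0 := fun h0 => hKne (by rw [h0]; ring)
  rw [h]
  field_simp
  linear_combination (-y) * hmul

lemma conv (n : Fin 5) :
    ∑ m : Fin 5, circRow m * circRow (n - m) = qi10 2 * circRow n := by
  fin_cases n
  · show ∑ m : Fin 5, circRow m * circRow ((0:Fin 5) - m) = qi10 2 * circRow 0
    rw [Fin.sum_univ_five]
    simp only [sub_zero, show ((0:Fin 5) - 1) = 4 from rfl, show ((0:Fin 5) - 2) = 3 from rfl, show ((0:Fin 5) - 3) = 2 from rfl, show ((0:Fin 5) - 4) = 1 from rfl, show ((1:Fin 5) - 1) = 0 from rfl, show ((1:Fin 5) - 2) = 4 from rfl, show ((1:Fin 5) - 3) = 3 from rfl, show ((1:Fin 5) - 4) = 2 from rfl, show ((2:Fin 5) - 1) = 1 from rfl, show ((2:Fin 5) - 2) = 0 from rfl, show ((2:Fin 5) - 3) = 4 from rfl, show ((2:Fin 5) - 4) = 3 from rfl, show ((3:Fin 5) - 1) = 2 from rfl, show ((3:Fin 5) - 2) = 1 from rfl, show ((3:Fin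 5) - 3) = 0 from rfl, show ((3:Fin 5) - 4) = 4 from rfl, show ((4:Fin 5) - 1) = 3 from rfl, show ((4:Fin 5) - 2) = 2 from rfl, show ((4:Fin 5) - 3) = 1 from rfl, show ((4:Fin 5) - 4) = 0 from rfl, circRow, Matrix.cons_val_zero, Matrix.cons_val_one, Matrix.head_cons,
      Matrix.cons_val_two, Matrix.cons_val_three, Matrix.cons_val_four, Matrix.tail_cons, Matrix.head_fin_const]
    simp only [div_mul_div_comm, ← add_div]
    refine key _ _ ?_
    rw [h3, h5]
    linear_combination ((-3)/8 + Real.sqrt 5 + (3/8)*Real.sqrt 5^2) * hr5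
  · show ∑ m : Fin 5, circRow m * circRow ((1:Fin 5) - m) = qi10 2 * circRow 1
    rw [Fin.sum_univ_five]
    simp only [sub_zero, show ((0:Fin 5) - 1) = 4 from rfl, show ((0:Fin 5) - 2) = 3 from rfl, show ((0:Fin 5) - 3) = 2 from rfl, show ((0:Fin 5) - 4) = 1 from rfl, show ((1:Fin 5) - 1) = 0 from rfl, show ((1:Fin 5) - 2) = 4 from rfl, show ((1:Fin 5) - 3) = 3 from rfl, show ((1:Fin 5) - 4) = 2 from rfl, show ((2:Fin 5) - 1) = 1 from rfl, show ((2:Fin 5) - 2) = 0 from rfl, show ((2:Fin 5) - 3) = 4 from rfl, show ((2:Fin 5) - 4) = 3 from rfl, show ((3:Fin 5) - 1) = 2 from rfl, show ((3:Fin 5) - 2) = 1 from rfl, show ((3:Fin 5) - 3) = 0 from rfl, show ((3:Fin 5) - 4) = 4 from rfl, show ((4:Fin 5) - 1) = 3 from rfl, show ((4:Fin 5) - 2) = 2 from rfl, show ((4:Fin 5) - 3) = 1 from rfl, show ((4:Fin 5) - 4) = 0 from rfl, circRow, Matrix.cons_val_zero, Matrix.cons_val_one, Matrix.head_cons,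
      Matrix.cons_val_two, Matrix.cons_val_three, Matrix.cons_val_four, Matrix.tail_cons, Matrix.head_fin_const]
    simp only [div_mul_div_comm, ← add_div]
    refine key _ _ ?_
    rw [h3, h5]
    linear_combination (39/16 + Real.sqrt 5 + (1/16)*Real.sqrt 5^2) * hr5
  · show ∑ m : Fin 5, circRow m * circRow ((2:Fin 5) - m) = qi10 2 * circRow 2
    rw [Fin.sum_univ_five]
    simp only [sub_zero, show ((0:Fin 5) - 1) = 4 from rfl, show ((0:Fin 5) - 2) = 3 from rfl, show ((0:Fin 5) - 3) = 2 from rfl, show ((0:Fin 5) - 4) = 1 from rfl, show ((1:Fin 5) - 1) = 0 from rfl, show ((1:Fin 5) - 2) = 4 from rfl, show ((1:Fin 5) - 3) = 3 from rfl, show ((1:Fin 5) - 4) = 2 from rfl, show ((2:Fin 5) - 1) = 1 from rfl, show ((2:Fin 5) - 2) = 0 from rfl, show ((2:Fin 5) - 3) = 4 from rfl, show ((2:Fin 5) - 4) = 3 from rfl, show ((3:Fin 5) - 1) = 2 from rfl, show ((3:Fin 5) - 2) = 1 from rfl, show ((3:Fin 5) - 3) = 0 from rfl, show ((3:Fin 5)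 - 4) = 4 from rfl, show ((4:Fin 5) - 1) = 3 from rfl, show ((4:Fin 5) - 2) = 2 from rfl, show ((4:Fin 5) - 3) = 1 from rfl, show ((4:Fin 5) - 4) = 0 from rfl, circRow, Matrix.cons_val_zero, Matrix.cons_val_one, Matrix.head_cons,
      Matrix.cons_val_two, Matrix.cons_val_three, Matrix.cons_val_four, Matrix.tail_cons, Matrix.head_fin_const]
    simp only [div_mul_div_comm, ← add_div]
    refine key _ _ ?_
    rw [h3, h5]
    linear_combination ((-9)/4 - (3/2)*Real.sqrt 5 - (1/4)*Real.sqrt 5^2) * hr5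
  · show ∑ m : Fin 5, circRow m * circRow ((3:Fin 5) - m) = qi10 2 * circRow 3
    rw [Fin.sum_univ_five]
    simp only [sub_zero, show ((0:Fin 5) - 1) = 4 from rfl, show ((0:Fin 5) - 2) = 3 from rfl, show ((0:Fin 5) - 3) = 2 from rfl, show ((0:Fin 5) - 4) = 1 from rfl, show ((1:Fin 5) - 1) = 0 from rfl, show ((1:Fin 5) - 2) = 4 from rfl, show ((1:Fin 5) - 3) = 3 from rfl, show ((1:Fin 5) - 4) = 2 from rfl, show ((2:Fin 5) - 1) = 1 from rfl, show ((2:Fin 5) - 2) = 0 from rfl, show ((2:Fin 5) - 3) = 4 from rfl, show ((2:Fin 5) - 4) = 3 from rfl, show ((3:Fin 5) - 1) = 2 from rfl, show ((3:Fin 5) - 2) = 1 from rfl, show ((3:Fin 5) - 3) = 0 from rfl, show ((3:Fin 5) - 4) = 4 from rfl, show ((4:Fin 5) - 1) = 3 from rfl, show ((4:Fin 5) - 2) = 2 from rfl, show ((4:Fin 5) - 3) = 1 from rfl, show ((4:Fin 5) - 4) = 0 from rfl, circRow, Matrix.cons_val_zero, Matrix.cons_val_one, Matrix.head_cons,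
      Matrix.cons_val_two, Matrix.cons_val_three, Matrix.cons_val_four, Matrix.tail_cons, Matrix.head_fin_const]
    simp only [div_mul_div_comm, ← add_div]
    refine key _ _ ?_
    rw [h3, h5]
    linear_combination ((-9)/4 - (3/2)*Real.sqrt 5 - (1/4)*Real.sqrt 5^2) * hr5
  · show ∑ m : Fin 5, circRow m * circRow ((4:Fin 5) - m) = qi10 2 * circRow 4
    rw [Fin.sum_univ_five]
    simp only [sub_zero, show ((0:Fin 5) - 1) = 4 from rfl, show ((0:Fin 5) - 2) = 3 from rfl, show ((0:Fin 5) - 3) = 2 from rfl, show ((0:Fin 5) - 4) = 1 from rfl, show ((1:Fin 5) - 1) = 0 from rfl, show ((1:Fin 5) - 2) = 4 from rfl, show ((1:Fin 5) - 3) = 3 from rfl, show ((1:Fin 5) - 4) = 2 from rfl, show ((2:Fin 5) - 1) = 1 from rfl, show ((2:Fin 5) - 2) = 0 from rfl, show ((2:Fin 5) - 3) = 4 from rfl, show ((2:Fin 5) - 4) = 3 from rfl, show ((3:Fin 5) - 1) = 2 from rfl, show ((3:Fin 5) - 2) = 1 from rfl, show ((3:Fin 5) - 3) = 0 from rfl,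 show ((3:Fin 5) - 4) = 4 from rfl, show ((4:Fin 5) - 1) = 3 from rfl, show ((4:Fin 5) - 2) = 2 from rfl, show ((4:Fin 5) - 3) = 1 from rfl, show ((4:Fin 5) - 4) = 0 from rfl, circRow, Matrix.cons_val_zero, Matrix.cons_val_one, Matrix.head_cons,
      Matrix.cons_val_two, Matrix.cons_val_three, Matrix.cons_val_four, Matrix.tail_cons, Matrix.head_fin_const]
    simp only [div_mul_div_comm, ← add_div]
    refine key _ _ ?_
    rw [h3, h5]
    linear_combination (39/16 + Real.sqrt 5 + (1/16)*Real.sqrt 5^2) * hr5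

/-- The 5×5 circulant block U^{d_i}_{d_{i+1}} of the exceptional cell system
on Γ^{4,6,⊂} is symmetric and satisfies the Hecke relation. -/
theorem circulant_hecke_block :
    circMat.IsSymm ∧ circMat * circMat = qi10 2 • circMat := by
  constructor
  · rw [Matrix.IsSymm]
    ext j k
    fin_cases j <;> fin_cases k <;> rfl
  · ext j k
    rw [Matrix.mul_apply, Matrix.smul_apply, smul_eq_mul]
    show (∑ l : Fin 5, circRow (l - j) * circRow (k - l)) = qi10 2 * circRow (k - j)
    rw [Fintype.sum_equiv (Equiv.subRight j)
      (fun l => circRow (l - j) * circRow (k - l))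
      (fun m => circRow m * circRow ((k - j) - m))
      (fun l => by simp [Equiv.subRight, sub_sub_sub_cancel_right])]
    exact conv (k - j)
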